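/- arXiv:2509.17480 — 9 statements merged into one kernel-verified Lean document; each statement's English description precedes it below -/
import Mathlib

section
/- Let 0 < r < R be real numbers and let λ > 0. Suppose v : ℝ → ℝ is continuous on [r, R], continuously differentiable on (r, R], positive on (r, R), and the function w(t) = t·v′(t) is differentiable at every t ∈ (r, R) with w′(t) = −λ·t·v(t). If v′(R) = 0 (Neumann condition at the outer radius), then v′(t) > 0 for every t ∈ (r, R). -/
open Set

/-- Radial ODE form of Lemma 2.1(i): positive eigenvalue, Neumann condition at the
outer radius `R` implies the radial profile is strictly increasing on `(r, R)`. -/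
theorem robin_neumann_radial_increasing
    (r R lam : ℝ) (hr : 0 < r) (hrR : r < R) (hlam : 0 < lam)
    (v v' : ℝ → ℝ)
    (hcont : ContinuousOn v (Icc r R))
    (hderiv : ∀ t ∈ Ioc r R, HasDerivAt v (v' t) t)
    (hderiv_cont : ContinuousOn v' (Ioc r R))
    (hpos : ∀ t ∈ Ioo r R, 0 < v t)
    (hode : ∀ t ∈ Ioo r R, HasDerivAt (fun s => s * v' s) (-lam * t * v t) t)
    (hNeumann : v' R = 0) :
    ∀ t ∈ Ioo r R, 0 < v' t := by
  intro t ht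
  set w : ℝ → ℝ := fun s => s * v' s with hw
  have hsub : Icc t R ⊆ Ioc r R := fun x hx => ⟨lt_of_lt_of_le ht.1 hx.1, hx.2⟩
  have hwc : ContinuousOn w (Icc t R) :=
    (continuousOn_id.mul (hderiv_cont.mono hsub))
  have hanti : StrictAntiOn w (Icc t R) := by
    apply strictAntiOn_of_deriv_neg (convex_Icc t R) hwc
    intro x hx
    rw [interior_Icc] at hx
    have hx' : x ∈ Ioo r R := ⟨ht.1.trans hx.1, hx.2⟩
    rw [(hode x hx').deriv]
    have := hpos x hx'
    nlinarith [mul_pos (mul_pos hlam (hr.trans hx'.1)) this]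
  have hwt : 0 < w t := by
    have := hanti ⟨le_refl t, ht.2.le⟩ ⟨ht.2.le, le_refl R⟩ ht.2
    simpa [hw, hNeumann] using this
  have htpos : 0 < t := hr.trans ht.1
  by_contra h
  push_neg at h
  have hwt2 : 0 < t * v' t := hwt
  nlinarith [mul_nonpos_of_nonneg_of_nonpos htpos.le h]
end

section
/- Let 0 < r < R be real numbers and let λ < 0. Suppose v : ℝ → ℝ is continuous on [r, R], continuously differentiable on [r, R), positive on (r, R), and the function w(t) = t·v′(t) is differentiable at every t ∈ (r, R) with w′(t) = −λ·t·v(t). If v′(r) = 0 (Neumann condition at the inner radius), then v′(t) > 0 for every t ∈ (r, R). -/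
open Set

/-- Radial ODE form of Lemma 2.2(ii): negative eigenvalue, Neumann condition at the
inner radius `r` implies the radial profile is strictly increasing on `(r, R)`. -/
theorem neumann_robin_radial_increasing
    (r R lam : ℝ) (hr : 0 < r) (hrR : r < R) (hlam : lam < 0)
    (v v' : ℝ → ℝ)
    (hcont : ContinuousOn v (Icc r R))
    (hderiv : ∀ t ∈ Ico r R, HasDerivAt v (v' t) t)
    (hderiv_cont : ContinuousOn v' (Ico r R))
    (hpos : ∀ t ∈ Ioo r R, 0 < v t)
    (hode : ∀ t ∈ Ioo r R, HasDerivAt (fun s => s * v' s) (-lam * t * v t) t)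
    (hNeumann : v' r = 0) :
    ∀ t ∈ Ioo r R, 0 < v' t := by
  intro t ht
  set w : ℝ → ℝ := fun s => s * v' s with hw
  have hsub : Icc r t ⊆ Ico r R := fun s hs => ⟨hs.1, lt_of_le_of_lt hs.2 ht.2⟩
  have hwc : ContinuousOn w (Icc r t) :=
    (continuousOn_id.mul (hderiv_cont.mono hsub))
  have hmono : StrictMonoOn w (Icc r t) := by
    apply strictMonoOn_of_deriv_pos (convex_Icc r t) hwc
    intro s hs
    rw [interior_Icc] at hs
    have hs' : s ∈ Ioo r R := ⟨hs.1, hs.2.trans ht.2⟩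
    rw [(hode s hs').deriv]
    have : 0 < s := hr.trans hs.1
    exact mul_pos (mul_pos (neg_pos.mpr hlam) this) (hpos s hs')
  have h0 : w r < w t := hmono ⟨le_refl r, (ht.1).le⟩ ⟨ht.1.le, le_refl t⟩ ht.1
  have htpos : 0 < t := hr.trans ht.1
  simp only [hw, hNeumann, mul_zero] at h0
  nlinarith [h0, htpos]
end

section
/- Let 0 < r < R, let h_in > 0, h_out > 0, and let λ > 0. Suppose v : ℝ → ℝ is continuously differentiable on [r, R], positive on [r, R], the function w(t) = t·v′(t) is differentiable at every t ∈ (r, R) with w′(t) = −λ·t·v(t), and v satisfies the Robin boundary conditions v′(r) = h_in·v(r) and v′(R) = −h_out·v(R). Then there exists a unique σ ∈ (r, R) such that v′(σ) = 0; moreover v′(t) > 0 for all t ∈ (r, σ) and v′(t) < 0 for all t ∈ (σ, R). -/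
open Set

/-- Radial ODE form of Lemma 2.3(i): both Robin parameters positive, positive eigenvalue.
The radial profile increases up to a unique interior radius `σ` and decreases afterwards. -/
theorem robin_robin_radial_unimodal_pos
    (r R h_in h_out lam : ℝ) (hr : 0 < r) (hrR : r < R)
    (hhin : 0 < h_in) (hhout : 0 < h_out) (hlam : 0 < lam)
    (v v' : ℝ → ℝ)
    (hderiv : ∀ t ∈ Icc r R, HasDerivAt v (v' t) t)
    (hderiv_cont : ContinuousOn v' (Icc r R))
    (hpos : ∀ t ∈ Icc r R, 0 < v t)
    (hode : ∀ t ∈ Ioo r R, HasDerivAt (fun s => s * v' s) (-lam * t * v t) t)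
    (hin : v' r = h_in * v r) (hout : v' R = -h_out * v R) :
    ∃ σ ∈ Ioo r R, v' σ = 0 ∧ (∀ t ∈ Ioo r σ, 0 < v' t) ∧ (∀ t ∈ Ioo σ R, v' t < 0) ∧
      ∀ τ ∈ Ioo r R, v' τ = 0 → τ = σ := by
  set w : ℝ → ℝ := fun s => s * v' s with hw
  have hwcont : ContinuousOn w (Icc r R) := continuousOn_id.mul hderiv_cont
  have hanti : StrictAntiOn w (Icc r R) := by
    apply StrictAntiOn.mono (s := Icc r R)
      (strictAntiOn_of_deriv_neg (convex_Icc r R) hwcont ?_) (subset_refl _)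
    intro x hx
    rw [interior_Icc] at hx
    rw [(hode x hx).deriv]
    have hx' : x ∈ Icc r R := Ioo_subset_Icc_self hx
    have hx0 : 0 < x := lt_trans hr hx.1
    have := hpos x hx'
    nlinarith [mul_pos (mul_pos hlam hx0) this]
  have hrI : r ∈ Icc r R := ⟨le_refl r, le_of_lt hrR⟩
  have hRI : R ∈ Icc r R := ⟨le_of_lt hrR, le_refl R⟩
  have hwr : 0 < w r := by
    have := hpos r hrI
    simp only [hw, hin]
    nlinarith [mul_pos hr (mul_pos hhin this)]
  have hwR : w R < 0 := by
    have := hpos R hRI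
    have hR0 : 0 < R := lt_trans hr hrR
    simp only [hw, hout]
    nlinarith [mul_pos hR0 (mul_pos hhout this)]
  have h0 : (0 : ℝ) ∈ Icc (w R) (w r) := ⟨le_of_lt hwR, le_of_lt hwr⟩
  obtain ⟨σ, hσI, hσ0⟩ := intermediate_value_Icc' (le_of_lt hrR) hwcont h0
  have hσr : σ ≠ r := fun h => by rw [h] at hσ0; exact absurd hσ0 (ne_of_gt hwr)
  have hσR : σ ≠ R := fun h => by rw [h] at hσ0; exact absurd hσ0 (ne_of_lt hwR)
  have hσIoo : σ ∈ Ioo r R := ⟨lt_of_le_of_ne hσI.1 (Ne.symm hσr), lt_of_le_of_ne hσI.2 hσR⟩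
  have hσpos : 0 < σ := lt_trans hr hσIoo.1
  refine ⟨σ, hσIoo, ?_, ?_, ?_, ?_⟩
  · have : σ * v' σ = 0 := hσ0
    exact (mul_eq_zero.mp this).resolve_left (ne_of_gt hσpos)
  · intro t ht
    have htI : t ∈ Icc r R := ⟨le_of_lt ht.1, le_of_lt (lt_trans ht.2 hσIoo.2)⟩
    have hwt : 0 < w t := by
      have := hanti htI hσI ht.2
      rwa [hσ0] at this
    have ht0 : 0 < t := lt_trans hr ht.1
    have : 0 < t * v' t := hwt
    nlinarith
  · intro t ht
    have htI : t ∈ Icc r R := ⟨le_of_lt (lt_trans hσIoo.1 ht.1), le_of_lt ht.2⟩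
    have hwt : w t < 0 := by
      have := hanti hσI htI ht.1
      rwa [hσ0] at this
    have ht0 : 0 < t := lt_trans hr (lt_trans hσIoo.1 ht.1)
    have : t * v' t < 0 := hwt
    nlinarith
  · intro τ hτ hτ0
    have hτI : τ ∈ Icc r R := Ioo_subset_Icc_self hτ
    have hwτ : w τ = 0 := by simp [hw, hτ0]
    exact hanti.injOn hτI hσI (hwτ.trans hσ0.symm)
end

section
/- Let 0 < r < R, let h_in < 0, h_out < 0, and let λ < 0. Suppose v : ℝ → ℝ is continuously differentiable on [r, R], positive on [r, R], the function w(t) = t·v′(t) is differentiable at every t ∈ (r, R) with w′(t) = −λ·t·v(t), and v satisfies the Robin boundary conditions v′(r) = h_in·v(r) and v′(R) = −h_out·v(R). Then there exists a unique σ ∈ (r, R) such that v′(σ) = 0; moreover v′(t) < 0 for all t ∈ (r, σ) and v′(t) > 0 for all t ∈ (σ, R). -/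
open Set

/-- Radial ODE form of Lemma 2.3(ii): both Robin parameters negative, negative eigenvalue.
The radial profile decreases down to a unique interior radius `σ` and increases afterwards. -/
theorem robin_robin_radial_unimodal_neg
    (r R h_in h_out lam : ℝ) (hr : 0 < r) (hrR : r < R)
    (hhin : h_in < 0) (hhout : h_out < 0) (hlam : lam < 0)
    (v v' : ℝ → ℝ)
    (hderiv : ∀ t ∈ Icc r R, HasDerivAt v (v' t) t)
    (hderiv_cont : ContinuousOn v' (Icc r R))
    (hpos : ∀ t ∈ Icc r R, 0 < v t)
    (hode : ∀ t ∈ Ioo r R, HasDerivAt (fun s => s * v' s) (-lam * t * v t) t)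
    (hin : v' r = h_in * v r) (hout : v' R = -h_out * v R) :
    ∃ σ ∈ Ioo r R, v' σ = 0 ∧ (∀ t ∈ Ioo r σ, v' t < 0) ∧ (∀ t ∈ Ioo σ R, 0 < v' t) ∧
      ∀ τ ∈ Ioo r R, v' τ = 0 → τ = σ := by
  set w : ℝ → ℝ := fun s => s * v' s with hw
  have hwc : ContinuousOn w (Icc r R) := continuousOn_id.mul hderiv_cont
  have hmono : StrictMonoOn w (Icc r R) := by
    apply strictMonoOn_of_deriv_pos (convex_Icc r R) hwc
    intro x hx
    rw [interior_Icc] at hx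
    rw [(hode x hx).deriv]
    have hx' : x ∈ Icc r R := Ioo_subset_Icc_self hx
    have := hpos x hx'
    have hx0 : 0 < x := hr.trans hx.1
    exact mul_pos (mul_pos (neg_pos.2 hlam) hx0) this
  have hwr : w r < 0 := by
    have := hpos r (left_mem_Icc.2 hrR.le)
    simp only [hw, hin]
    have : h_in * v r < 0 := mul_neg_of_neg_of_pos hhin this
    exact mul_neg_of_pos_of_neg hr this
  have hwR : 0 < w R := by
    have := hpos R (right_mem_Icc.2 hrR.le)
    have hR0 : 0 < R := hr.trans hrR
    simp only [hw, hout]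
    exact mul_pos hR0 (mul_pos (neg_pos.2 hhout) this)
  have h0 : (0 : ℝ) ∈ Ioo (w r) (w R) := ⟨hwr, hwR⟩
  obtain ⟨σ, hσ, hσ0⟩ := intermediate_value_Ioo hrR.le hwc h0
  have hσIcc : σ ∈ Icc r R := Ioo_subset_Icc_self hσ
  have hσR : 0 < σ := hr.trans hσ.1
  have hv'σ : v' σ = 0 := by
    have : σ * v' σ = 0 := hσ0
    rcases mul_eq_zero.1 this with h | h
    · exact absurd h hσR.ne'
    · exact h
  refine ⟨σ, hσ, hv'σ, ?_, ?_, ?_⟩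
  · intro t ht
    have htIcc : t ∈ Icc r R := ⟨ht.1.le, (ht.2.trans hσ.2).le⟩
    have : w t < w σ := hmono htIcc hσIcc ht.2
    rw [hσ0] at this
    have ht0 : 0 < t := hr.trans_le htIcc.1
    by_contra h
    exact absurd this (not_lt.2 (mul_nonneg ht0.le (not_lt.1 h)))
  · intro t ht
    have htIcc : t ∈ Icc r R := ⟨(hσ.1.trans ht.1).le, ht.2.le⟩
    have : w σ < w t := hmono hσIcc htIcc ht.1
    rw [hσ0] at this
    have ht0 : 0 < t := hr.trans_le htIcc.1
    by_contra h
    exact absurd this (not_lt.2 (mul_nonpos_of_nonneg_of_nonpos ht0.le (not_lt.1 h)))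
  · intro τ hτ hτ0
    have hτIcc : τ ∈ Icc r R := Ioo_subset_Icc_self hτ
    have : w τ = w σ := by rw [hσ0]; simp [hw, hτ0]
    exact hmono.injOn hτIcc hσIcc this
end

section
/- Let 0 < r < δ₁, let h ∈ ℝ and λ ∈ ℝ. Suppose v : ℝ → ℝ is twice continuously differentiable on [r, δ₁], satisfies (t·v′(t))′ = −λ·t·v(t) for all t ∈ (r, δ₁), satisfies the Robin condition v′(r) = h·v(r) at r, and satisfies v(δ₁) > 0 and v′(δ₁) < 0. Then the strict inequality ∫_r^{δ₁} t·v′(t)² dt + h·r·v(r)² < λ·∫_r^{δ₁} t·v(t)² dt holds. -/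
open Set intervalIntegral

/-- The strict integral inequality from the proof of Lemma 2.4(ii): multiplying the
Sturm–Liouville equation by `v` and integrating by parts over `(r, δ₁)`. -/
theorem robin_integral_strict_inequality
    (r δ₁ h lam : ℝ) (hr : 0 < r) (hrδ : r < δ₁)
    (v v' v'' : ℝ → ℝ)
    (hd1 : ∀ t ∈ Icc r δ₁, HasDerivAt v (v' t) t)
    (hd2 : ∀ t ∈ Icc r δ₁, HasDerivAt v' (v'' t) t)
    (hc0 : ContinuousOn v (Icc r δ₁))
    (hc1 : ContinuousOn v' (Icc r δ₁))
    (hc2 : ContinuousOn v'' (Icc r δ₁))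
    (hode : ∀ t ∈ Ioo r δ₁, v' t + t * v'' t = -lam * t * v t)
    (hrobin : v' r = h * v r)
    (hvpos : 0 < v δ₁) (hvneg : v' δ₁ < 0) :
    (∫ t in r..δ₁, t * (v' t) ^ 2) + h * r * (v r) ^ 2
      < lam * ∫ t in r..δ₁, t * (v t) ^ 2 := by
  have hrδ' : r ≤ δ₁ := le_of_lt hrδ
  have huIcc : uIcc r δ₁ = Icc r δ₁ := uIcc_of_le hrδ'
  have hF' : ∀ t ∈ uIcc r δ₁, HasDerivAt (fun t => t * v' t * v t)
      ((v' t + t * v'' t) * v t + t * (v' t) ^ 2) t := by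
    intro t ht
    rw [huIcc] at ht
    have h1 := (hasDerivAt_id t).fun_mul (hd2 t ht)
    have h2 := h1.fun_mul (hd1 t ht)
    simp only [id_eq] at h2
    refine h2.congr_deriv ?_
    ring
  have hint1 : IntervalIntegrable (fun t => (v' t + t * v'' t) * v t) MeasureTheory.volume r δ₁ := by
    apply ContinuousOn.intervalIntegrable
    rw [huIcc]
    exact (hc1.add (continuousOn_id.mul hc2)).mul hc0
  have hint2 : IntervalIntegrable (fun t => t * (v' t) ^ 2) MeasureTheory.volume r δ₁ := by
    apply ContinuousOn.intervalIntegrable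
    rw [huIcc]
    exact continuousOn_id.mul (hc1.pow 2)
  have hFTC := intervalIntegral.integral_eq_sub_of_hasDerivAt hF' (hint1.add hint2)
  rw [intervalIntegral.integral_add hint1 hint2] at hFTC
  have hcongr : (∫ t in r..δ₁, (v' t + t * v'' t) * v t)
      = ∫ t in r..δ₁, -lam * (t * (v t) ^ 2) := by
    apply intervalIntegral.integral_congr_ae
    have h0 : ∀ᵐ x : ℝ, x ≠ δ₁ := by
      rw [MeasureTheory.ae_iff]
      simp [MeasureTheory.measure_singleton]
      --  (μ := MeasureTheory.volume) δ₁
    filter_upwards [h0] with x hx hxI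
    rw [uIoc_of_le hrδ'] at hxI
    have hxo : x ∈ Ioo r δ₁ := ⟨hxI.1, lt_of_le_of_ne hxI.2 hx⟩
    rw [hode x hxo]; ring
  rw [hcongr, intervalIntegral.integral_const_mul] at hFTC
  have hδ : (0:ℝ) < δ₁ := hr.trans hrδ
  have hterm : δ₁ * v' δ₁ * v δ₁ < 0 :=
    mul_neg_of_neg_of_pos (mul_neg_of_pos_of_neg hδ hvneg) hvpos
  rw [hrobin] at hFTC
  have heq : r * (h * v r) * v r = h * r * v r ^ 2 := by ring
  linarith [hFTC, hterm, heq]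
end

section
/- Let z₁ = (x₁, y₁) ∈ ℝ² and let γ = (x, y) : [0, ∞) → ℝ² be differentiable with γ′(t) ≠ 0 and γ(t) ≠ z₁ for every t ≥ 0. Assume that γ(t) → z₁ as t → ∞ and that the normalized tangents converge: γ′(t)/‖γ′(t)‖ → (a, b) as t → ∞ for some (a, b) ∈ ℝ². Then the scalar product ⟨ γ′(t)/‖γ′(t)‖ , ( −(y(t) − y₁), x(t) − x₁ )/‖γ(t) − z₁‖ ⟩ converges to 0 as t → ∞. -/
open Filter Topology
open scoped RealInnerProductSpace

set_option maxHeartbeats 1000000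

/-- Rotation by 90 degrees as a linear map on `ℝ²`. -/
noncomputable def Jlin : EuclideanSpace ℝ (Fin 2) →ₗ[ℝ] EuclideanSpace ℝ (Fin 2) where
  toFun v := WithLp.toLp 2 ![-(v 1), v 0]
  map_add' u v := by
    ext i
    fin_cases i <;> simp [PiLp.add_apply] <;> ring
  map_smul' c v := by
    ext i
    fin_cases i <;> simp [PiLp.smul_apply] <;> ring
/-- Rotation by 90 degrees as a continuous linear map on `ℝ²`. -/
noncomputable def Jc : EuclideanSpace ℝ (Fin 2) →L[ℝ] EuclideanSpace ℝ (Fin 2) :=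
  LinearMap.toContinuousLinearMap Jlin

lemma Jc_apply (v : EuclideanSpace ℝ (Fin 2)) : Jc v = WithLp.toLp 2 ![-(v 1), v 0] := rfl

lemma inner_Jc (w v : EuclideanSpace ℝ (Fin 2)) :
    ⟪w, Jc v⟫ = w 0 * (-(v 1)) + w 1 * v 0 := by
  simp [Jc_apply, PiLp.inner_apply, Fin.sum_univ_two]
  ring

lemma inner_Jc_self (v : EuclideanSpace ℝ (Fin 2)) : ⟪v, Jc v⟫ = 0 := by
  rw [inner_Jc]; ring

lemma norm_Jc (v : EuclideanSpace ℝ (Fin 2)) : ‖Jc v‖ = ‖v‖ := by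
  rw [Jc_apply, EuclideanSpace.norm_eq, EuclideanSpace.norm_eq]
  congr 1
  simp [Fin.sum_univ_two]
  ring

/-- Lemma 4.6: secants of a curve converging to a point tend to be orthogonal to the
rotated (perpendicular) secant direction, i.e. the normalized tangents and the normalized
secants become collinear in the limit. -/
theorem secants_tend_to_tangents
    (z₁ : EuclideanSpace ℝ (Fin 2)) (γ γ' : ℝ → EuclideanSpace ℝ (Fin 2))
    (ab : EuclideanSpace ℝ (Fin 2))
    (hderiv : ∀ t : ℝ, 0 ≤ t → HasDerivAt γ (γ' t) t)
    (hγ'ne : ∀ t : ℝ, 0 ≤ t → γ' t ≠ 0)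
    (hγne : ∀ t : ℝ, 0 ≤ t → γ t ≠ z₁)
    (hlim : Tendsto γ atTop (𝓝 z₁))
    (htan : Tendsto (fun t => (‖γ' t‖)⁻¹ • γ' t) atTop (𝓝 ab)) :
    Tendsto
      (fun t => ⟪(‖γ' t‖)⁻¹ • γ' t,
        (‖γ t - z₁‖)⁻¹ • (WithLp.toLp 2 ![-(γ t 1 - z₁ 1), γ t 0 - z₁ 0] : EuclideanSpace ℝ (Fin 2))⟫)
      atTop (𝓝 0) := by
  classical
  set u : ℝ → EuclideanSpace ℝ (Fin 2) := fun t => γ t - z₁ with hu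
  set T : ℝ → EuclideanSpace ℝ (Fin 2) := fun t => (‖γ' t‖)⁻¹ • γ' t with hTdef
  have hvec : ∀ t : ℝ,
      (WithLp.toLp 2 ![-(γ t 1 - z₁ 1), γ t 0 - z₁ 0] : EuclideanSpace ℝ (Fin 2)) = Jc (u t) := by
    intro t
    ext i
    fin_cases i <;> simp [Jc_apply, hu, PiLp.sub_apply]
  have hulim : Tendsto u atTop (𝓝 0) := by
    have := hlim.sub_const z₁
    simpa [hu, sub_self] using this
  have habnorm : ‖ab‖ = 1 := by
    have h1 : Tendsto (fun t => ‖T t‖) atTop (𝓝 ‖ab‖) := htan.norm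
    have h2 : (fun t => ‖T t‖) =ᶠ[atTop] fun _ => (1 : ℝ) := by
      filter_upwards [eventually_ge_atTop 0] with t ht
      simp [hTdef, norm_smul, inv_mul_cancel₀ (norm_ne_zero_iff.mpr (hγ'ne t ht))]
    exact tendsto_nhds_unique (h1.congr' h2) tendsto_const_nhds
  set F : ℝ → ℝ := fun t => ⟪ab, Jc (u t)⟫ with hFdef
  set G : ℝ → ℝ := fun t => ⟪ab, u t⟫ with hGdef
  have hderivu : ∀ t : ℝ, 0 ≤ t → HasDerivAt u (γ' t) t := fun t ht =>
    (hderiv t ht).sub_const z₁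
  have hγ'eq : ∀ t : ℝ, 0 ≤ t → γ' t = ‖γ' t‖ • T t := by
    intro t ht
    rw [hTdef, smul_smul, mul_inv_cancel₀ (norm_ne_zero_iff.mpr (hγ'ne t ht)), one_smul]
  have hFderiv : ∀ t : ℝ, 0 ≤ t → HasDerivAt F (‖γ' t‖ * ⟪ab, Jc (T t)⟫) t := by
    intro t ht
    have h2 : HasDerivAt (fun s => Jc (u s)) (Jc (γ' t)) t :=
      Jc.hasFDerivAt.comp_hasDerivAt t (hderivu t ht)
    have h3 : HasDerivAt F (⟪ab, Jc (γ' t)⟫ + ⟪(0 : EuclideanSpace ℝ (Fin 2)), Jc (u t)⟫) t :=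
      (hasDerivAt_const t ab).inner ℝ h2
    have h4 : ⟪ab, Jc (γ' t)⟫ = ‖γ' t‖ * ⟪ab, Jc (T t)⟫ := by
      conv_lhs => rw [hγ'eq t ht]
      rw [map_smul, real_inner_smul_right]
    rw [inner_zero_left, add_zero, h4] at h3
    exact h3
  have hGderiv : ∀ t : ℝ, 0 ≤ t → HasDerivAt G (‖γ' t‖ * ⟪ab, T t⟫) t := by
    intro t ht
    have h3 : HasDerivAt G (⟪ab, γ' t⟫ + ⟪(0 : EuclideanSpace ℝ (Fin 2)), u t⟫) t :=
      (hasDerivAt_const t ab).inner ℝ (hderivu t ht)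
    have h4 : ⟪ab, γ' t⟫ = ‖γ' t‖ * ⟪ab, T t⟫ := by
      conv_lhs => rw [hγ'eq t ht]
      rw [real_inner_smul_right]
    rw [inner_zero_left, add_zero, h4] at h3
    exact h3
  have hJcT : Tendsto (fun t => ⟪ab, Jc (T t)⟫) atTop (𝓝 0) := by
    have h := Tendsto.inner (𝕜 := ℝ) (tendsto_const_nhds (x := ab))
      ((Jc.continuous.tendsto ab).comp htan)
    rw [inner_Jc_self] at h
    exact h
  have habT : Tendsto (fun t => ⟪ab, T t⟫) atTop (𝓝 1) := by
    have h := Tendsto.inner (𝕜 := ℝ) (tendsto_const_nhds (x := ab)) htan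
    rw [real_inner_self_eq_norm_sq, habnorm, one_pow] at h
    exact h
  have hFlim : Tendsto F atTop (𝓝 0) := by
    have h := Tendsto.inner (𝕜 := ℝ) (tendsto_const_nhds (x := ab))
      ((Jc.continuous.tendsto 0).comp hulim)
    rw [map_zero, inner_zero_right] at h
    exact h
  have hGlim : Tendsto G atTop (𝓝 0) := by
    have h := Tendsto.inner (𝕜 := ℝ) (tendsto_const_nhds (x := ab)) hulim
    rw [inner_zero_right] at h
    exact h
  -- The key part: the perpendicular component divided by the distance tends to 0.
  have hB : Tendsto (fun t => (‖u t‖)⁻¹ * F t) atTop (𝓝 0) := by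
    rw [NormedAddCommGroup.tendsto_nhds_zero]
    intro ε hε
    set δ : ℝ := ε / 4 with hδdef
    have hδpos : 0 < δ := by positivity
    have hev : ∀ᶠ t in atTop, 0 ≤ t ∧ |⟪ab, Jc (T t)⟫| ≤ δ ∧ 1 / 2 ≤ ⟪ab, T t⟫ := by
      filter_upwards [eventually_ge_atTop 0,
        hJcT.eventually (Metric.ball_mem_nhds 0 hδpos),
        habT.eventually (lt_mem_nhds (show (1 : ℝ) / 2 < 1 by norm_num))] with t h1 h2 h3
      rw [Real.dist_eq, sub_zero] at h2
      exact ⟨h1, le_of_lt h2, le_of_lt h3⟩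
    obtain ⟨T₀, hT₀⟩ := eventually_atTop.mp hev
    have h0T₀ : 0 ≤ T₀ := (hT₀ T₀ le_rfl).1
    have key : ∀ s : ℝ, s = 1 ∨ s = -1 →
        MonotoneOn (fun t => 2 * δ * G t + s * F t) (Set.Ici T₀) := by
      intro s hs
      have hder : ∀ t ∈ Set.Ici T₀,
          HasDerivAt (fun t => 2 * δ * G t + s * F t)
            (2 * δ * (‖γ' t‖ * ⟪ab, T t⟫) + s * (‖γ' t‖ * ⟪ab, Jc (T t)⟫)) t := by
        intro t ht
        have ht0 : 0 ≤ t := le_trans h0T₀ ht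
        exact ((hGderiv t ht0).const_mul (2 * δ)).add ((hFderiv t ht0).const_mul s)
      apply monotoneOn_of_deriv_nonneg (convex_Ici T₀)
      · intro t ht
        exact (hder t ht).continuousAt.continuousWithinAt
      · intro t ht
        rw [interior_Ici] at ht
        exact ((hder t (Set.mem_Ici.mpr (le_of_lt (Set.mem_Ioi.mp ht)))).differentiableAt).differentiableWithinAt
      · intro t ht
        rw [interior_Ici] at ht
        have htT₀ : T₀ ≤ t := le_of_lt ht
        rw [(hder t htT₀).deriv]
        obtain ⟨ht0, h1, h2⟩ := hT₀ t htT₀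
        have habs := abs_le.mp h1
        have hn : (0 : ℝ) ≤ ‖γ' t‖ := norm_nonneg _
        have hp1 := mul_le_mul_of_nonneg_left h2 (by positivity : (0:ℝ) ≤ 2 * δ * ‖γ' t‖)
        have hp2 := mul_le_mul_of_nonneg_left habs.1 hn
        have hp3 := mul_le_mul_of_nonneg_left habs.2 hn
        rcases hs with h | h <;> subst h <;> nlinarith [hp1, hp2, hp3]
    have hlimφ : ∀ s : ℝ, Tendsto (fun r => 2 * δ * G r + s * F r) atTop (𝓝 0) := by
      intro s
      have h := (hGlim.const_mul (2 * δ)).add (hFlim.const_mul s)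
      simpa only [mul_zero, add_zero] using h
    filter_upwards [eventually_ge_atTop T₀] with t ht
    obtain ⟨ht0, h1, h2⟩ := hT₀ t ht
    have hle : ∀ s : ℝ, s = 1 ∨ s = -1 → 2 * δ * G t + s * F t ≤ 0 := by
      intro s hs
      refine ge_of_tendsto (hlimφ s) ?_
      filter_upwards [eventually_ge_atTop t] with r hr
      exact key s hs (Set.mem_Ici.mpr ht) (Set.mem_Ici.mpr (le_trans ht hr)) hr
    have hF1 := hle 1 (Or.inl rfl)
    have hF2 := hle (-1) (Or.inr rfl)
    have hGle : |G t| ≤ ‖u t‖ := by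
      calc |G t| ≤ ‖ab‖ * ‖u t‖ := abs_real_inner_le_norm ab (u t)
        _ = ‖u t‖ := by rw [habnorm, one_mul]
    have hupos : 0 < ‖u t‖ :=
      norm_pos_iff.mpr (sub_ne_zero.mpr (hγne t ht0))
    have hGabs := abs_le.mp hGle
    have hG1 : -G t ≤ ‖u t‖ := by linarith [hGabs.1]
    have hp := mul_le_mul_of_nonneg_left hG1 (by positivity : (0:ℝ) ≤ 2 * δ)
    have hFabs : |F t| ≤ 2 * δ * ‖u t‖ := by
      rw [abs_le]
      constructor <;> nlinarith [hp, hF1, hF2]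
    have hbound : (‖u t‖)⁻¹ * |F t| ≤ 2 * δ := by
      rw [inv_mul_le_iff₀ hupos]
      calc |F t| ≤ 2 * δ * ‖u t‖ := hFabs
        _ = ‖u t‖ * (2 * δ) := by ring
    calc ‖(‖u t‖)⁻¹ * F t‖ = (‖u t‖)⁻¹ * |F t| := by
          rw [Real.norm_eq_abs, abs_mul, abs_inv, abs_norm]
      _ ≤ 2 * δ := hbound
      _ < ε := by rw [hδdef]; linarith
  -- The easy part.
  have hA : Tendsto (fun t => ⟪T t - ab, (‖u t‖)⁻¹ • Jc (u t)⟫) atTop (𝓝 0) := by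
    apply squeeze_zero_norm (a := fun t => ‖T t - ab‖)
    · intro t
      calc ‖⟪T t - ab, (‖u t‖)⁻¹ • Jc (u t)⟫‖
          ≤ ‖T t - ab‖ * ‖(‖u t‖)⁻¹ • Jc (u t)‖ := norm_inner_le_norm _ _
        _ ≤ ‖T t - ab‖ * 1 := by
            gcongr
            rw [norm_smul, norm_Jc, norm_inv, norm_norm]
            rcases eq_or_ne (‖u t‖) 0 with h | h
            · simp [h]
            · rw [inv_mul_cancel₀ h]
        _ = ‖T t - ab‖ := mul_one _
    · have h := (htan.sub_const ab).norm
      simpa only [sub_self, norm_zero] using h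
  have hfinal := hA.add hB
  rw [add_zero] at hfinal
  apply hfinal.congr
  intro t
  rw [hvec t]
  have huu : (‖γ t - z₁‖ : ℝ) = ‖u t‖ := by rw [hu]
  rw [huu]
  simp only [inner_sub_left, real_inner_smul_right, hFdef]
  ring
end

section
/- Let Ω ⊆ ℝ² be a measurable set, and let u, v : ℝ² → ℝ be differentiable at every point of Ω with u > 0 on Ω. Assume that the functions x ↦ ⟨∇u(x), ∇(v²/u)(x)⟩ and x ↦ ‖∇v(x)‖² are Lebesgue integrable on Ω. Then ∫_Ω ⟨∇u(x), ∇(v²/u)(x)⟩ dx ≤ ∫_Ω ‖∇v(x)‖² dx. -/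
open MeasureTheory
open scoped RealInnerProductSpace

lemma picone_pointwise {E : Type*} [NormedAddCommGroup E] [InnerProductSpace ℝ E]
    [CompleteSpace E]
    (u v : E → ℝ) (x : E) (hu : DifferentiableAt ℝ u x) (hv : DifferentiableAt ℝ v x)
    (hpos : 0 < u x) :
    ⟪gradient u x, gradient (fun z => (v z) ^ 2 / u z) x⟫ ≤ ‖gradient v x‖ ^ 2 := by
  set a := gradient u x with ha
  set b := gradient v x with hb
  set c := u x
  set d := v x
  have hc : c ≠ 0 := ne_of_gt hpos
  set Da := InnerProductSpace.toDual ℝ E a with hDa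
  set Db := InnerProductSpace.toDual ℝ E b with hDb
  have hfu : HasFDerivAt u Da x := hu.hasGradientAt.hasFDerivAt
  have hfv : HasFDerivAt v Db x := hv.hasGradientAt.hasFDerivAt
  have hfinv : HasFDerivAt (fun z => (u z)⁻¹) ((-(c ^ 2)⁻¹) • Da) x :=
    (hasDerivAt_inv hc).comp_hasFDerivAt x hfu
  have hsq : HasFDerivAt (fun z => (v z) ^ 2) ((2 * d) • Db) x := by
    have h2 : HasFDerivAt (fun z => v z * v z) (d • Db + d • Db) x := hfv.mul hfv
    have he : (fun z : E => (v z) ^ 2) = fun z => v z * v z := by ext z; ring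
    rw [he, show (2 * d) • Db = d • Db + d • Db by rw [mul_smul, two_smul]]
    exact h2
  have hmul : HasFDerivAt (fun z => (v z) ^ 2 * (u z)⁻¹)
      (d ^ 2 • ((-(c ^ 2)⁻¹) • Da) + c⁻¹ • ((2 * d) • Db)) x := hsq.mul hfinv
  have hdiv : HasFDerivAt (fun z => (v z) ^ 2 / u z)
      (d ^ 2 • ((-(c ^ 2)⁻¹) • Da) + c⁻¹ • ((2 * d) • Db)) x := by
    simpa [div_eq_mul_inv] using hmul
  have hgrad : HasGradientAt (fun z => (v z) ^ 2 / u z)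
      ((2 * d / c) • b - (d ^ 2 / c ^ 2) • a) x := by
    rw [hasGradientAt_iff_hasFDerivAt]
    convert hdiv using 1
    · rfl
    ext y
    simp only [hDa, hDb, map_sub, _root_.map_smul, ContinuousLinearMap.add_apply,
      ContinuousLinearMap.smul_apply, ContinuousLinearMap.sub_apply, smul_eq_mul,
      InnerProductSpace.toDual_apply_apply]
    field_simp
    ring
  rw [hgrad.gradient]
  have key : ⟪a, (2 * d / c) • b - (d ^ 2 / c ^ 2) • a⟫ =
      ‖b‖ ^ 2 - ‖b - (d / c) • a‖ ^ 2 := by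
    have h1 : ‖b - (d / c) • a‖ ^ 2
        = ‖b‖ ^ 2 - 2 * ((d / c) * ⟪b, a⟫) + (d / c) ^ 2 * ‖a‖ ^ 2 := by
      rw [norm_sub_sq_real, norm_smul, real_inner_smul_right]
      rw [mul_pow, Real.norm_eq_abs, sq_abs]
    rw [h1, inner_sub_right, real_inner_smul_right, real_inner_smul_right,
      real_inner_self_eq_norm_sq, real_inner_comm]
    field_simp
    ring
  rw [key]
  nlinarith [sq_nonneg ‖b - (d / c) • a‖]

/-- The integral Picone inequality (inequality (4.13) of the paper). -/
theorem picone_integral_inequality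
    (Ω : Set (EuclideanSpace ℝ (Fin 2))) (hΩ : MeasurableSet Ω)
    (u v : EuclideanSpace ℝ (Fin 2) → ℝ)
    (hu : ∀ x ∈ Ω, DifferentiableAt ℝ u x)
    (hv : ∀ x ∈ Ω, DifferentiableAt ℝ v x)
    (hpos : ∀ x ∈ Ω, 0 < u x)
    (hint1 : IntegrableOn
      (fun x => ⟪gradient u x, gradient (fun z => (v z) ^ 2 / u z) x⟫) Ω)
    (hint2 : IntegrableOn (fun x => ‖gradient v x‖ ^ 2) Ω) :
    ∫ x in Ω, ⟪gradient u x, gradient (fun z => (v z) ^ 2 / u z) x⟫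
      ≤ ∫ x in Ω, ‖gradient v x‖ ^ 2 := by
  exact setIntegral_mono_on hint1 hint2 hΩ fun x hx =>
    picone_pointwise u v x (hu x hx) (hv x hx) (hpos x hx)
end

section
/- Let 0 < T ≤ t⋆ be real numbers and M ≥ 0. Let g : ℝ → ℝ be measurable with 0 ≤ g on (0, t⋆) and g square-integrable on (0, t⋆); let G : ℝ → ℝ be measurable with 0 ≤ G on (0, T) and G square-integrable on (0, T); let φ : ℝ → ℝ be measurable with 0 ≤ φ(α) ≤ M for all α ∈ (0, T). Assume g(α) ≤ G(α) for almost every α ∈ (0, T) and ∫_0^{t⋆} g(α)² dα = ∫_0^{T} G(α)² dα. Then ∫_0^{T} φ(α)²·g(α)² dα + M²·∫_{T}^{t⋆} g(α)² dα ≥ ∫_0^{T} φ(α)²·G(α)² dα. -/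
open Set MeasureTheory intervalIntegral

/-- The key integral estimate (3.15) in the proof of Theorem 3.1 for `h_in > 0`:
with `0 ≤ φ ≤ M`, `g ≤ G` a.e. on `(0, T)`, and
`∫₀^{t⋆} g² = ∫₀^{T} G²`, one has
`∫₀^{T} φ²g² + M²∫_T^{t⋆} g² ≥ ∫₀^{T} φ²G²`. -/
theorem key_integral_estimate_increasing
    (T tstar M : ℝ) (hT : 0 < T) (hTt : T ≤ tstar) (hM : 0 ≤ M)
    (g G φ : ℝ → ℝ)
    (hgm : Measurable g) (hgnn : ∀ α ∈ Ioo (0 : ℝ) tstar, 0 ≤ g α)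
    (hgint : IntervalIntegrable (fun α => (g α) ^ 2) volume 0 tstar)
    (hGm : Measurable G) (hGnn : ∀ α ∈ Ioo (0 : ℝ) T, 0 ≤ G α)
    (hGint : IntervalIntegrable (fun α => (G α) ^ 2) volume 0 T)
    (hφm : Measurable φ) (hφ : ∀ α ∈ Ioo (0 : ℝ) T, 0 ≤ φ α ∧ φ α ≤ M)
    (hgG : ∀ᵐ α ∂volume, α ∈ Ioo (0 : ℝ) T → g α ≤ G α)
    (harea : ∫ α in (0 : ℝ)..tstar, (g α) ^ 2 = ∫ α in (0 : ℝ)..T, (G α) ^ 2) :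
    (∫ α in (0 : ℝ)..T, (φ α) ^ 2 * (g α) ^ 2) + M ^ 2 * ∫ α in T..tstar, (g α) ^ 2
      ≥ ∫ α in (0 : ℝ)..T, (φ α) ^ 2 * (G α) ^ 2 := by
  -- g² integrable on [0,T] and [T,tstar]
  have hgT : IntervalIntegrable (fun α => (g α) ^ 2) volume 0 T :=
    hgint.mono_set (by
      rw [uIcc_of_le hT.le, uIcc_of_le (hT.le.trans hTt)]
      exact Icc_subset_Icc le_rfl hTt)
  have hgT' : IntervalIntegrable (fun α => (g α) ^ 2) volume T tstar :=
    hgint.mono_set (by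
      rw [uIcc_of_le hTt, uIcc_of_le (hT.le.trans hTt)]
      exact Icc_subset_Icc hT.le le_rfl)
  -- a.e. facts on the restricted measure
  have haeIoo : ∀ᵐ α ∂(volume.restrict (Ioc (0:ℝ) T)), α ∈ Ioo (0:ℝ) T := by
    have h1 : ∀ᵐ α ∂(volume.restrict (Ioc (0:ℝ) T)), α ∈ Ioc (0:ℝ) T :=
      ae_restrict_mem measurableSet_Ioc
    have h2 : ∀ᵐ α ∂(volume.restrict (Ioc (0:ℝ) T)), α ≠ T := by
      refine ae_restrict_of_ae ?_
      rw [ae_iff]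
      simp [Real.volume_singleton]
    filter_upwards [h1, h2] with α h1 h2
    exact ⟨h1.1, lt_of_le_of_ne h1.2 h2⟩
  have hgG' : ∀ᵐ α ∂(volume.restrict (Ioc (0:ℝ) T)), g α ≤ G α := by
    filter_upwards [haeIoo, ae_restrict_of_ae hgG] with α h1 h2
    exact h2 h1
  have hgnn' : ∀ᵐ α ∂(volume.restrict (Ioc (0:ℝ) T)), 0 ≤ g α := by
    filter_upwards [haeIoo] with α h1
    exact hgnn α ⟨h1.1, h1.2.trans_le hTt⟩
  have hφ' : ∀ᵐ α ∂(volume.restrict (Ioc (0:ℝ) T)), 0 ≤ φ α ∧ φ α ≤ M := by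
    filter_upwards [haeIoo] with α h1
    exact hφ α h1
  -- integrability of products
  have hgon : IntegrableOn (fun α => (g α) ^ 2) (Ioc (0:ℝ) T) volume :=
    (intervalIntegrable_iff_integrableOn_Ioc_of_le hT.le).1 hgT
  have hGon : IntegrableOn (fun α => (G α) ^ 2) (Ioc (0:ℝ) T) volume :=
    (intervalIntegrable_iff_integrableOn_Ioc_of_le hT.le).1 hGint
  have hφg : IntegrableOn (fun α => (φ α) ^ 2 * (g α) ^ 2) (Ioc (0:ℝ) T) volume := by
    refine (hgon.const_mul (M ^ 2)).mono
      ((hφm.pow_const 2).mul (hgm.pow_const 2)).aestronglyMeasurable.restrict ?_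
    filter_upwards [hφ'] with α hφa
    have h1 : (φ α) ^ 2 ≤ M ^ 2 := by nlinarith [hφa.1, hφa.2]
    have h2 : (0:ℝ) ≤ (g α) ^ 2 := sq_nonneg _
    rw [Real.norm_eq_abs, Real.norm_eq_abs, abs_mul, abs_of_nonneg (sq_nonneg (φ α)),
      abs_of_nonneg h2]
    calc (φ α) ^ 2 * (g α) ^ 2 ≤ M ^ 2 * (g α) ^ 2 := by nlinarith
      _ ≤ |M ^ 2 * (g α) ^ 2| := le_abs_self _
  have hφG : IntegrableOn (fun α => (φ α) ^ 2 * (G α) ^ 2) (Ioc (0:ℝ) T) volume := by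
    refine (hGon.const_mul (M ^ 2)).mono
      ((hφm.pow_const 2).mul (hGm.pow_const 2)).aestronglyMeasurable.restrict ?_
    filter_upwards [hφ'] with α hφa
    have h2 : (0:ℝ) ≤ (G α) ^ 2 := sq_nonneg _
    rw [Real.norm_eq_abs, Real.norm_eq_abs, abs_mul, abs_of_nonneg (sq_nonneg (φ α)),
      abs_of_nonneg h2]
    have h1 : (φ α) ^ 2 ≤ M ^ 2 := by nlinarith [hφa.1, hφa.2]
    calc (φ α) ^ 2 * (G α) ^ 2 ≤ M ^ 2 * (G α) ^ 2 := by nlinarith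
      _ ≤ |M ^ 2 * (G α) ^ 2| := le_abs_self _
  have hsubint : IntegrableOn (fun α => M ^ 2 * ((G α) ^ 2 - (g α) ^ 2)) (Ioc (0:ℝ) T) volume := by
    have := (hGon.sub hgon).const_mul (M ^ 2)
    simpa [mul_sub, IntegrableOn] using this
  -- main pointwise inequality: φ²G² ≤ φ²g² + M²(G² - g²)
  have hpt : ∀ᵐ α ∂(volume.restrict (Ioc (0:ℝ) T)),
      (φ α) ^ 2 * (G α) ^ 2 ≤ (φ α) ^ 2 * (g α) ^ 2 + M ^ 2 * ((G α) ^ 2 - (g α) ^ 2) := by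
    filter_upwards [hφ', hgG', hgnn'] with α hφa hgGa hgna
    have hsq : (g α) ^ 2 ≤ (G α) ^ 2 := by nlinarith
    have h1 : (φ α) ^ 2 ≤ M ^ 2 := by nlinarith [hφa.1, hφa.2]
    nlinarith [sq_nonneg (φ α)]
  -- integrate the inequality
  have hmono : ∫ α in Ioc (0:ℝ) T, (φ α) ^ 2 * (G α) ^ 2
      ≤ ∫ α in Ioc (0:ℝ) T, ((φ α) ^ 2 * (g α) ^ 2 + M ^ 2 * ((G α) ^ 2 - (g α) ^ 2)) :=
    integral_mono_ae hφG (hφg.add hsubint) hpt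
  have hsplit : ∫ α in Ioc (0:ℝ) T, ((φ α) ^ 2 * (g α) ^ 2 + M ^ 2 * ((G α) ^ 2 - (g α) ^ 2))
      = (∫ α in Ioc (0:ℝ) T, (φ α) ^ 2 * (g α) ^ 2)
        + M ^ 2 * ((∫ α in Ioc (0:ℝ) T, (G α) ^ 2) - ∫ α in Ioc (0:ℝ) T, (g α) ^ 2) := by
    rw [integral_add hφg hsubint, MeasureTheory.integral_const_mul,
      integral_sub hGon hgon]
  -- adjacent intervals
  have hadj : (∫ α in (0:ℝ)..T, (g α) ^ 2) + ∫ α in T..tstar, (g α) ^ 2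
      = ∫ α in (0:ℝ)..tstar, (g α) ^ 2 :=
    intervalIntegral.integral_add_adjacent_intervals hgT hgT'
  rw [ge_iff_le, intervalIntegral.integral_of_le hT.le, intervalIntegral.integral_of_le hT.le]
  refine hmono.trans ?_
  rw [hsplit]
  have e1 : ∫ α in Ioc (0:ℝ) T, (G α) ^ 2 = ∫ α in (0:ℝ)..T, (G α) ^ 2 :=
    (intervalIntegral.integral_of_le hT.le).symm
  have e2 : ∫ α in Ioc (0:ℝ) T, (g α) ^ 2 = ∫ α in (0:ℝ)..T, (g α) ^ 2 :=
    (intervalIntegral.integral_of_le hT.le).symm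
  rw [e1, e2, ← harea, ← hadj]
  ring_nf
  exact le_rfl
end

section
/- Let 0 < T ≤ t⋆ be real numbers and 0 ≤ m ≤ C. Let g : ℝ → ℝ be measurable with 0 ≤ g on (0, t⋆) and g square-integrable on (0, t⋆); let G : ℝ → ℝ be measurable with 0 ≤ G on (0, T) and G square-integrable on (0, T); let φ : ℝ → ℝ be measurable with m ≤ φ(α) ≤ C for all α ∈ (0, T). Assume g(α) ≤ G(α) for almost every α ∈ (0, T) and ∫_0^{t⋆} g(α)² dα = ∫_0^{T} G(α)² dα. Then ∫_0^{T} φ(α)²·g(α)² dα + m²·∫_{T}^{t⋆} g(α)² dα ≤ ∫_0^{T} φ(α)²·G(α)² dα. -/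
open Set MeasureTheory intervalIntegral

/-- The key integral estimate (3.22) in the proof of Theorem 3.1 for `h_in < 0`:
with `m ≤ φ ≤ C`, `g ≤ G` a.e. on `(0, T)`, and
`∫₀^{t⋆} g² = ∫₀^{T} G²`, one has
`∫₀^{T} φ²g² + m²∫_T^{t⋆} g² ≤ ∫₀^{T} φ²G²`. -/
theorem key_integral_estimate_decreasing
    (T tstar m C : ℝ) (hT : 0 < T) (hTt : T ≤ tstar) (hm : 0 ≤ m) (hmC : m ≤ C)
    (g G φ : ℝ → ℝ)
    (hgm : Measurable g) (hgnn : ∀ α ∈ Ioo (0 : ℝ) tstar, 0 ≤ g α)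
    (hgint : IntervalIntegrable (fun α => (g α) ^ 2) volume 0 tstar)
    (hGm : Measurable G) (hGnn : ∀ α ∈ Ioo (0 : ℝ) T, 0 ≤ G α)
    (hGint : IntervalIntegrable (fun α => (G α) ^ 2) volume 0 T)
    (hφm : Measurable φ) (hφ : ∀ α ∈ Ioo (0 : ℝ) T, m ≤ φ α ∧ φ α ≤ C)
    (hgG : ∀ᵐ α ∂volume, α ∈ Ioo (0 : ℝ) T → g α ≤ G α)
    (harea : ∫ α in (0 : ℝ)..tstar, (g α) ^ 2 = ∫ α in (0 : ℝ)..T, (G α) ^ 2) :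
    (∫ α in (0 : ℝ)..T, (φ α) ^ 2 * (g α) ^ 2) + m ^ 2 * ∫ α in T..tstar, (g α) ^ 2
      ≤ ∫ α in (0 : ℝ)..T, (φ α) ^ 2 * (G α) ^ 2 := by
  have hT' : (0:ℝ) ≤ T := hT.le
  have h0t : (0:ℝ) ≤ tstar := hT'.trans hTt
  have hg0T : IntervalIntegrable (fun α => g α ^ 2) volume 0 T :=
    hgint.mono_set (by rw [uIcc_of_le hT', uIcc_of_le h0t]; exact Icc_subset_Icc le_rfl hTt)
  have hgTt : IntervalIntegrable (fun α => g α ^ 2) volume T tstar :=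
    hgint.mono_set (by rw [uIcc_of_le hTt, uIcc_of_le h0t]; exact Icc_subset_Icc hT' le_rfl)
  have hsplit := intervalIntegral.integral_add_adjacent_intervals hg0T hgTt
  have hgI : IntegrableOn (fun α => g α ^ 2) (Ioc 0 T) volume :=
    (intervalIntegrable_iff_integrableOn_Ioc_of_le hT').mp hg0T
  have hGI : IntegrableOn (fun α => G α ^ 2) (Ioc 0 T) volume :=
    (intervalIntegrable_iff_integrableOn_Ioc_of_le hT').mp hGint
  have hne : ∀ᵐ α ∂(volume.restrict (Ioc (0:ℝ) T)), α ≠ T := by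
    refine ae_restrict_of_ae ?_
    rw [ae_iff]
    simp
  have hmem : ∀ᵐ α ∂(volume.restrict (Ioc (0:ℝ) T)), α ∈ Ioc (0:ℝ) T :=
    ae_restrict_mem measurableSet_Ioc
  have hgG' : ∀ᵐ α ∂(volume.restrict (Ioc (0:ℝ) T)), α ∈ Ioo (0:ℝ) T → g α ≤ G α :=
    ae_restrict_of_ae hgG
  have hIoo : ∀ᵐ α ∂(volume.restrict (Ioc (0:ℝ) T)), α ∈ Ioo (0:ℝ) T := by
    filter_upwards [hne, hmem] with α h1 h2
    exact ⟨h2.1, lt_of_le_of_ne h2.2 h1⟩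
  have hφg : IntegrableOn (fun α => φ α ^ 2 * g α ^ 2) (Ioc 0 T) volume := by
    refine Integrable.mono' (hgI.const_mul (C ^ 2)) ?_ ?_
    · exact ((hφm.pow_const 2).mul (hgm.pow_const 2)).aestronglyMeasurable
    · filter_upwards [hIoo] with α hα
      obtain ⟨h1, h2⟩ := hφ α hα
      have hφnn : 0 ≤ φ α := hm.trans h1
      have hg2 : 0 ≤ g α ^ 2 := sq_nonneg _
      rw [Real.norm_eq_abs, abs_of_nonneg (by positivity)]
      have h3 : φ α ^ 2 ≤ C ^ 2 := by nlinarith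
      exact mul_le_mul_of_nonneg_right h3 hg2
  have hφG : IntegrableOn (fun α => φ α ^ 2 * G α ^ 2) (Ioc 0 T) volume := by
    refine Integrable.mono' (hGI.const_mul (C ^ 2)) ?_ ?_
    · exact ((hφm.pow_const 2).mul (hGm.pow_const 2)).aestronglyMeasurable
    · filter_upwards [hIoo] with α hα
      obtain ⟨h1, h2⟩ := hφ α hα
      have hφnn : 0 ≤ φ α := hm.trans h1
      have hG2 : 0 ≤ G α ^ 2 := sq_nonneg _
      rw [Real.norm_eq_abs, abs_of_nonneg (by positivity)]
      have h3 : φ α ^ 2 ≤ C ^ 2 := by nlinarith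
      exact mul_le_mul_of_nonneg_right h3 hG2
  have hpt : (fun α => φ α ^ 2 * g α ^ 2 + m ^ 2 * G α ^ 2)
      ≤ᵐ[volume.restrict (Ioc (0:ℝ) T)]
      (fun α => φ α ^ 2 * G α ^ 2 + m ^ 2 * g α ^ 2) := by
    filter_upwards [hIoo, hgG'] with α hα hle
    obtain ⟨h1, _⟩ := hφ α hα
    have hgnn' : 0 ≤ g α := hgnn α ⟨hα.1, hα.2.trans_le hTt⟩
    have hGle : g α ≤ G α := hle hα
    have h3 : m ^ 2 ≤ φ α ^ 2 := by nlinarith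
    have h4 : g α ^ 2 ≤ G α ^ 2 := by nlinarith
    nlinarith
  have hmono := integral_mono_ae (μ := volume.restrict (Ioc (0:ℝ) T))
      (hφg.add (hGI.const_mul (m ^ 2))) (hφG.add (hgI.const_mul (m ^ 2))) hpt
  simp only [Pi.add_apply] at hmono
  rw [integral_add hφg (hGI.const_mul _), integral_add hφG (hgI.const_mul _),
      MeasureTheory.integral_const_mul, MeasureTheory.integral_const_mul] at hmono
  rw [intervalIntegral.integral_of_le hT', intervalIntegral.integral_of_le hTt,
      intervalIntegral.integral_of_le hT']
  rw [intervalIntegral.integral_of_le h0t, intervalIntegral.integral_of_le hT'] at harea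
  rw [intervalIntegral.integral_of_le hT', intervalIntegral.integral_of_le hTt,
      intervalIntegral.integral_of_le h0t] at hsplit
  have e : (∫ x in Ioc T tstar, g x ^ 2) =
      (∫ x in Ioc (0:ℝ) T, G x ^ 2) - ∫ x in Ioc (0:ℝ) T, g x ^ 2 := by linarith
  rw [e, mul_sub]
  linarith
end
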